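/- Let n ≥ 1, let b be a nonzero real number, and let a, c, d : Fin n → ℂ (indexed j = 1, …, n). If the function t ↦ Σ_{j=1}^{n} (a_j·e^{ibt} + c_j·e^{−ibt})·t^{1−j} + Σ_{j=1}^{n} d_j·t^{1/2−j} is o(t^{1/2−n}) as t → ∞, then a_j = c_j = d_j = 0 for all j = 1, …, n. -/

import Mathlib

open Filter Asymptotics
open Topology

private lemma norm_expI (x : ℝ) : ‖Complex.exp (Complex.I * x)‖ = 1 := by
  rw [Complex.norm_exp]; simp

private lemma norm_expI' (x : ℝ) : ‖Complex.exp (-(Complex.I * x))‖ = 1 := by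
  rw [Complex.norm_exp]; simp

private lemma norm_expI2 (x y : ℝ) : ‖Complex.exp (Complex.I * ((x:ℂ) * y))‖ = 1 := by
  rw [Complex.norm_exp]; simp

private lemma norm_expI2' (x y : ℝ) : ‖Complex.exp (-(Complex.I * ((x:ℂ) * y)))‖ = 1 := by
  rw [Complex.norm_exp]; simp

private lemma coef_rpow_bigO {f : ℝ → ℂ} {C : ℝ} (hf : ∀ t : ℝ, ‖f t‖ ≤ C)
    {p q : ℝ} (hpq : p ≤ q) :
    (fun t : ℝ => f t * ((t ^ p : ℝ) : ℂ)) =O[atTop] fun t : ℝ => t ^ q := by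
  apply IsBigO.of_bound C
  filter_upwards [eventually_ge_atTop (1:ℝ)] with t ht
  have ht0 : 0 < t := lt_of_lt_of_le one_pos ht
  rw [norm_mul, Complex.norm_real, Real.norm_eq_abs, Real.norm_eq_abs,
    abs_of_pos (Real.rpow_pos_of_pos ht0 p), abs_of_pos (Real.rpow_pos_of_pos ht0 q)]
  calc ‖f t‖ * t ^ p ≤ C * t ^ p := mul_le_mul_of_nonneg_right (hf t) (Real.rpow_pos_of_pos ht0 p).le
    _ ≤ C * t ^ q := mul_le_mul_of_nonneg_left (Real.rpow_le_rpow_of_exponent_le ht hpq)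
        (le_trans (norm_nonneg _) (hf 0))

private lemma rpow_bigO_rpow {p q : ℝ} (hpq : p ≤ q) :
    (fun t : ℝ => t ^ p) =O[atTop] fun t : ℝ => t ^ q := by
  apply IsBigO.of_bound 1
  filter_upwards [eventually_ge_atTop (1:ℝ)] with t ht
  have ht0 : 0 < t := lt_of_lt_of_le one_pos ht
  rw [one_mul, Real.norm_eq_abs, Real.norm_eq_abs,
    abs_of_pos (Real.rpow_pos_of_pos ht0 p), abs_of_pos (Real.rpow_pos_of_pos ht0 q)]
  exact Real.rpow_le_rpow_of_exponent_le ht hpq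

private lemma castR_bigO (p : ℝ) :
    (fun t : ℝ => ((t ^ p : ℝ) : ℂ)) =O[atTop] fun t : ℝ => t ^ p := by
  apply IsBigO.of_bound 1
  filter_upwards with t
  rw [one_mul, Complex.norm_real]

private lemma exp_shift (m : ℤ) (x : ℝ) :
    Complex.exp (Complex.I * ((2*Real.pi*m + x : ℝ) : ℂ)) = Complex.exp (Complex.I * x) := by
  rw [show (Complex.I * ((2*Real.pi*m + x : ℝ) : ℂ))
      = (m:ℂ) * (2*Real.pi*Complex.I) + Complex.I * x by push_cast; ring,
    Complex.exp_add, Complex.exp_int_mul_two_pi_mul_I, one_mul]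

private lemma exp_shift' (m : ℤ) (x : ℝ) :
    Complex.exp (-(Complex.I * ((2*Real.pi*m + x : ℝ) : ℂ))) = Complex.exp (-(Complex.I * x)) := by
  rw [show (-(Complex.I * ((2*Real.pi*m + x : ℝ) : ℂ)))
      = ((-m : ℤ):ℂ) * (2*Real.pi*Complex.I) + -(Complex.I * x) by push_cast; ring,
    Complex.exp_add, Complex.exp_int_mul_two_pi_mul_I, one_mul]

private lemma key (b : ℝ) (hb : b ≠ 0) :
    ∀ (n : ℕ) (a c d : ℕ → ℂ),
      ((fun t : ℝ =>
          (∑ j ∈ Finset.range n,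
            (a j * Complex.exp (Complex.I * (b * t))
              + c j * Complex.exp (-(Complex.I * (b * t))))
            * ((t ^ (-(j:ℝ)) : ℝ) : ℂ))
          + ∑ j ∈ Finset.range n, d j * ((t ^ (-(1/2:ℝ) - j) : ℝ) : ℂ))
        =o[atTop] fun t : ℝ => t ^ ((1/2:ℝ) - n)) →
      ∀ j < n, a j = 0 ∧ c j = 0 ∧ d j = 0 := by
  intro n
  induction n with
  | zero => intro a c d h j hj; omega
  | succ n ih =>
    intro a c d h
    set T : ℝ → ℂ := fun t =>
      (∑ j ∈ Finset.range n,
        (a (j+1) * Complex.exp (Complex.I * (b * t))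
          + c (j+1) * Complex.exp (-(Complex.I * (b * t))))
        * ((t ^ (-((j+1 : ℕ):ℝ)) : ℝ) : ℂ))
      + ∑ j ∈ Finset.range n, d (j+1) * ((t ^ (-(1/2:ℝ) - ((j+1 : ℕ):ℝ)) : ℝ) : ℂ) with hTdef
    have hFT : (fun t : ℝ =>
          (∑ j ∈ Finset.range (n+1),
            (a j * Complex.exp (Complex.I * (b * t))
              + c j * Complex.exp (-(Complex.I * (b * t))))
            * ((t ^ (-(j:ℝ)) : ℝ) : ℂ))
          + ∑ j ∈ Finset.range (n+1), d j * ((t ^ (-(1/2:ℝ) - j) : ℝ) : ℂ))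
        = fun t : ℝ => (a 0 * Complex.exp (Complex.I * (b * t))
            + c 0 * Complex.exp (-(Complex.I * (b * t))))
          + d 0 * ((t ^ (-(1/2:ℝ)) : ℝ) : ℂ) + T t := by
      funext t
      rw [Finset.sum_range_succ' (fun j =>
            (a j * Complex.exp (Complex.I * (b * t))
              + c j * Complex.exp (-(Complex.I * (b * t))))
            * ((t ^ (-(j:ℝ)) : ℝ) : ℂ)) n,
          Finset.sum_range_succ' (fun j => d j * ((t ^ (-(1/2:ℝ) - j) : ℝ) : ℂ)) n,
          hTdef]
      simp only [Nat.cast_zero, neg_zero, Real.rpow_zero, Complex.ofReal_one, mul_one, sub_zero]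
      ring
    rw [hFT] at h
    -- T is O(t^(-1))
    have hTbig : T =O[atTop] fun t : ℝ => t ^ (-(1:ℝ)) := by
      rw [hTdef]
      refine IsBigO.add (IsBigO.fun_sum fun j _ => ?_) (IsBigO.fun_sum fun j _ => ?_)
      · refine coef_rpow_bigO (C := ‖a (j+1)‖ + ‖c (j+1)‖) (fun t => ?_) ?_
        · exact (norm_add_le _ _).trans (by rw [norm_mul, norm_mul, norm_expI2, norm_expI2',
            mul_one, mul_one])
        · have : (0:ℝ) ≤ (j:ℝ) := Nat.cast_nonneg j
          push_cast
          linarith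
      · refine coef_rpow_bigO (C := ‖d (j+1)‖) (fun t => le_rfl) ?_
        have : (0:ℝ) ≤ (j:ℝ) := Nat.cast_nonneg j
        push_cast
        linarith
    have hdhalf : (fun t : ℝ => d 0 * ((t ^ (-(1/2:ℝ)) : ℝ) : ℂ))
        =O[atTop] fun t : ℝ => t ^ (-(1/2:ℝ)) := coef_rpow_bigO (fun _ => le_rfl) le_rfl
    have htail : Tendsto (fun t : ℝ => d 0 * ((t ^ (-(1/2:ℝ)) : ℝ) : ℂ) + T t) atTop (𝓝 0) := by
      refine IsBigO.trans_tendsto (g'' := fun t : ℝ => t ^ (-(1/2:ℝ)))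
        (hdhalf.add (hTbig.trans (rpow_bigO_rpow (by norm_num)))) ?_
      exact tendsto_rpow_neg_atTop (by norm_num)
    have hFo : Tendsto (fun t : ℝ => (a 0 * Complex.exp (Complex.I * (b * t))
            + c 0 * Complex.exp (-(Complex.I * (b * t))))
          + d 0 * ((t ^ (-(1/2:ℝ)) : ℝ) : ℂ) + T t) atTop (𝓝 0) := by
      refine h.isBigO.trans_tendsto ?_
      have he : ((1/2:ℝ) - ((n+1 : ℕ):ℝ)) = -((n:ℝ) + 1/2) := by push_cast; ring
      rw [he]
      exact tendsto_rpow_neg_atTop (by positivity)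
    have hP : Tendsto (fun t : ℝ => a 0 * Complex.exp (Complex.I * (b * t))
        + c 0 * Complex.exp (-(Complex.I * (b * t)))) atTop (𝓝 0) := by
      refine Tendsto.congr (fun t => by ring) (f₁ := fun t : ℝ =>
        ((a 0 * Complex.exp (Complex.I * (b * t))
            + c 0 * Complex.exp (-(Complex.I * (b * t))))
          + d 0 * ((t ^ (-(1/2:ℝ)) : ℝ) : ℂ) + T t)
        - (d 0 * ((t ^ (-(1/2:ℝ)) : ℝ) : ℂ) + T t)) ?_
      simpa using hFo.sub htail
    have hseq : ∀ s : ℝ, a 0 * Complex.exp (Complex.I * (b * s))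
        + c 0 * Complex.exp (-(Complex.I * (b * s))) = 0 := by
      intro s
      have habs : (0:ℝ) < |b| := abs_pos.mpr hb
      have hu : Tendsto (fun k : ℕ => 2*Real.pi*k/|b| + s) atTop atTop := by
        apply tendsto_atTop_add_const_right
        have h2 : Tendsto (fun k : ℕ => (2*Real.pi/|b|) * (k:ℝ)) atTop atTop :=
          Tendsto.const_mul_atTop (by positivity) tendsto_natCast_atTop_atTop
        exact h2.congr fun k => by ring
      have hcomp := hP.comp hu
      have hval : ∀ k : ℕ,
          ((fun t : ℝ => a 0 * Complex.exp (Complex.I * (b * t))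
            + c 0 * Complex.exp (-(Complex.I * (b * t))))
            ∘ (fun k : ℕ => 2*Real.pi*k/|b| + s)) k
          = a 0 * Complex.exp (Complex.I * (b * s))
            + c 0 * Complex.exp (-(Complex.I * (b * s))) := by
        intro k
        simp only [Function.comp_apply]
        obtain ⟨m, hm⟩ : ∃ m : ℤ, b * (2*Real.pi*k/|b| + s) = 2*Real.pi*m + b*s := by
          rcases abs_choice b with hb1 | hb1
          · refine ⟨(k:ℤ), ?_⟩
            rw [mul_add]
            congr 1
            rw [hb1]
            push_cast
            field_simp
          · refine ⟨-(k:ℤ), ?_⟩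
            rw [mul_add]
            congr 1
            rw [hb1]
            push_cast
            field_simp
            try ring
            try linear_combination (-(Real.pi * (k:ℝ) * 2)) * mul_inv_cancel₀ hb
        have hc2 : ((b:ℂ) * (((2*Real.pi*k/|b| + s : ℝ)):ℂ))
            = ((2*Real.pi*(m:ℝ) + b*s : ℝ) : ℂ) := by
          exact_mod_cast congrArg (fun x : ℝ => (x : ℂ)) hm
        push_cast at hc2 ⊢
        rw [hc2]
        rw [show ((2:ℂ)*Real.pi*(m:ℂ) + (b:ℂ)*(s:ℂ)) = (((2*Real.pi*(m:ℝ) + b*s : ℝ)):ℂ) by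
          push_cast; ring]
        rw [exp_shift m (b*s), exp_shift' m (b*s)]
        push_cast
        ring_nf
      have hconst : Tendsto (fun _ : ℕ => a 0 * Complex.exp (Complex.I * (b * s))
          + c 0 * Complex.exp (-(Complex.I * (b * s)))) atTop (𝓝 0) := by
        refine Tendsto.congr (fun k => ?_) hcomp
        exact hval k
      exact tendsto_nhds_unique tendsto_const_nhds hconst
    have h1 : a 0 + c 0 = 0 := by
      have := hseq 0
      simpa using this
    have h2 : a 0 = c 0 := by
      have h2' := hseq (Real.pi/(2*b))
      have hb2 : ((b:ℂ) * ((Real.pi/(2*b) : ℝ):ℂ)) = ((Real.pi/2 : ℝ):ℂ) := by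
        have : b * (Real.pi/(2*b)) = Real.pi/2 := by field_simp
        exact_mod_cast congrArg (fun x : ℝ => (x : ℂ)) this
      push_cast at hb2
      push_cast at h2'
      rw [hb2] at h2'
      have hexpI : Complex.exp (Complex.I * ((Real.pi : ℂ)/2)) = Complex.I := by
        rw [mul_comm, Complex.exp_mul_I, Complex.cos_pi_div_two, Complex.sin_pi_div_two]
        ring
      have hexpI' : Complex.exp (-(Complex.I * ((Real.pi : ℂ)/2))) = -Complex.I := by
        rw [show -(Complex.I * ((Real.pi : ℂ)/2)) = (-((Real.pi:ℂ)/2)) * Complex.I by ring,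
          Complex.exp_mul_I, Complex.cos_neg, Complex.sin_neg,
          Complex.cos_pi_div_two, Complex.sin_pi_div_two]
        ring
      rw [hexpI, hexpI'] at h2'
      have h3 : (a 0 - c 0) * Complex.I = 0 := by linear_combination h2'
      rcases mul_eq_zero.mp h3 with h4 | h4
      · exact sub_eq_zero.mp h4
      · exact absurd h4 Complex.I_ne_zero
    have ha0 : a 0 = 0 := by linear_combination h1/2 + h2/2
    have hc0 : c 0 = 0 := by linear_combination h1/2 - h2/2
    -- step 2 : d 0 = 0
    have hhalfF : Tendsto (fun t : ℝ => ((t ^ ((1/2:ℝ)) : ℝ):ℂ)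
        * ((a 0 * Complex.exp (Complex.I * (b * t))
            + c 0 * Complex.exp (-(Complex.I * (b * t))))
          + d 0 * ((t ^ (-(1/2:ℝ)) : ℝ) : ℂ) + T t)) atTop (𝓝 0) := by
      have h5 := (castR_bigO (1/2)).mul_isLittleO h
      have h6 : (fun t : ℝ => t^((1/2:ℝ)) * t^((1/2:ℝ) - ((n+1:ℕ):ℝ))) =O[atTop]
          (fun _ : ℝ => (1:ℝ)) := by
        apply IsBigO.of_bound 1
        filter_upwards [eventually_ge_atTop (1:ℝ)] with t ht
        have ht0 : (0:ℝ) < t := lt_of_lt_of_le one_pos ht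
        rw [← Real.rpow_add ht0, Real.norm_eq_abs, Real.norm_eq_abs,
          abs_of_pos (Real.rpow_pos_of_pos ht0 _)]
        simp only [abs_one, mul_one]
        refine Real.rpow_le_one_of_one_le_of_nonpos ht ?_
        push_cast
        linarith [Nat.cast_nonneg (α := ℝ) n]
      exact (isLittleO_one_iff _).mp (h5.trans_isBigO h6)
    have hTmul : Tendsto (fun t : ℝ => ((t ^ ((1/2:ℝ)) : ℝ):ℂ) * T t) atTop (𝓝 0) := by
      have h7 := (castR_bigO (1/2)).mul hTbig
      refine h7.trans_tendsto ?_
      have h8 : Tendsto (fun t : ℝ => t ^ (-(1/2:ℝ))) atTop (𝓝 (0:ℝ)) :=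
        tendsto_rpow_neg_atTop (by norm_num)
      refine h8.congr' ?_
      filter_upwards [eventually_gt_atTop (0:ℝ)] with t ht
      rw [← Real.rpow_add ht]
      norm_num
    have hQ : Tendsto (fun t : ℝ => ((t ^ ((1/2:ℝ)) : ℝ):ℂ)
        * ((a 0 * Complex.exp (Complex.I * (b * t))
            + c 0 * Complex.exp (-(Complex.I * (b * t))))
          + d 0 * ((t ^ (-(1/2:ℝ)) : ℝ) : ℂ) + T t)) atTop (𝓝 (d 0)) := by
      have base : Tendsto (fun t : ℝ => d 0 + ((t ^ ((1/2:ℝ)) : ℝ):ℂ) * T t) atTop (𝓝 (d 0)) := by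
        simpa using tendsto_const_nhds.add hTmul
      refine base.congr' ?_
      filter_upwards [eventually_gt_atTop (0:ℝ)] with t ht
      rw [ha0, hc0]
      have hxy : ((t ^ ((1/2:ℝ)) : ℝ):ℂ) * ((t ^ (-(1/2:ℝ)) : ℝ):ℂ) = 1 := by
        rw [← Complex.ofReal_mul, ← Real.rpow_add ht]
        norm_num
      linear_combination (-(d 0)) * hxy
    have hd0 : d 0 = 0 := tendsto_nhds_unique hQ hhalfF
    -- step 3 : reduce to n
    have hG : (fun t : ℝ =>
          (∑ j ∈ Finset.range n,
            ((fun j => a (j+1)) j * Complex.exp (Complex.I * (b * t))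
              + (fun j => c (j+1)) j * Complex.exp (-(Complex.I * (b * t))))
            * ((t ^ (-(j:ℝ)) : ℝ) : ℂ))
          + ∑ j ∈ Finset.range n, (fun j => d (j+1)) j * ((t ^ (-(1/2:ℝ) - j) : ℝ) : ℂ))
        =o[atTop] fun t : ℝ => t ^ ((1/2:ℝ) - (n:ℝ)) := by
      have h9 := (castR_bigO 1).mul_isLittleO h
      refine h9.congr' ?_ ?_
      · filter_upwards [eventually_gt_atTop (0:ℝ)] with t ht
        rw [ha0, hc0, hd0, hTdef]
        simp only [zero_mul, add_zero, zero_add]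
        rw [mul_add, Finset.mul_sum, Finset.mul_sum]
        congr 1
        · refine Finset.sum_congr rfl fun j _ => ?_
          have hxy : ((t ^ ((1:ℝ)) : ℝ):ℂ) * ((t ^ (-((j+1:ℕ):ℝ)) : ℝ):ℂ)
              = ((t ^ (-(j:ℝ)) : ℝ):ℂ) := by
            rw [← Complex.ofReal_mul, ← Real.rpow_add ht]
            have he : (1:ℝ) + (-((j+1:ℕ):ℝ)) = -(j:ℝ) := by push_cast; ring
            rw [he]
          calc ((t ^ ((1:ℝ)) : ℝ):ℂ)
              * ((a (j+1) * Complex.exp (Complex.I * (b * t))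
                + c (j+1) * Complex.exp (-(Complex.I * (b * t))))
                * ((t ^ (-((j+1:ℕ):ℝ)) : ℝ):ℂ))
              = (a (j+1) * Complex.exp (Complex.I * (b * t))
                + c (j+1) * Complex.exp (-(Complex.I * (b * t))))
                * (((t ^ ((1:ℝ)) : ℝ):ℂ) * ((t ^ (-((j+1:ℕ):ℝ)) : ℝ):ℂ)) := by ring
            _ = _ := by rw [hxy]
        · refine Finset.sum_congr rfl fun j _ => ?_
          have hxy : ((t ^ ((1:ℝ)) : ℝ):ℂ) * ((t ^ (-(1/2:ℝ) - ((j+1:ℕ):ℝ)) : ℝ):ℂ)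
              = ((t ^ (-(1/2:ℝ) - (j:ℝ)) : ℝ):ℂ) := by
            rw [← Complex.ofReal_mul, ← Real.rpow_add ht]
            have he : (1:ℝ) + (-(1/2:ℝ) - ((j+1:ℕ):ℝ)) = -(1/2:ℝ) - (j:ℝ) := by
              push_cast; ring
            rw [he]
          calc ((t ^ ((1:ℝ)) : ℝ):ℂ) * (d (j+1) * ((t ^ (-(1/2:ℝ) - ((j+1:ℕ):ℝ)) : ℝ):ℂ))
              = d (j+1) * (((t ^ ((1:ℝ)) : ℝ):ℂ)
                * ((t ^ (-(1/2:ℝ) - ((j+1:ℕ):ℝ)) : ℝ):ℂ)) := by ring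
            _ = _ := by rw [hxy]
      · filter_upwards [eventually_gt_atTop (0:ℝ)] with t ht
        rw [← Real.rpow_add ht]
        congr 1
        push_cast
        ring
    intro j hj
    cases j with
    | zero => exact ⟨ha0, hc0, hd0⟩
    | succ m => exact ih (fun j => a (j+1)) (fun j => c (j+1)) (fun j => d (j+1)) hG m (by omega)

/-- Asymptotic linear independence of `e^{ibt}·t^{1-j}`, `e^{-ibt}·t^{1-j}` and the
half-integer orders `t^{1/2-j}` for `j = 1, …, n` (here `a j`, `c j`, `d j` with
`j : Fin n` denote the coefficients of order `j+1`): if the combination is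
`o(t^{1/2-n})` as `t → ∞`, all coefficients vanish. -/
theorem asymptotic_linear_independence_osc_half
    (n : ℕ) (hn : 1 ≤ n) (b : ℝ) (hb : b ≠ 0) (a c d : Fin n → ℂ)
    (h : (fun t : ℝ =>
          (∑ j : Fin n,
            (a j * Complex.exp (Complex.I * (b * t))
              + c j * Complex.exp (-(Complex.I * (b * t))))
            * ((t ^ ((1 : ℝ) - ((j : ℕ) + 1)) : ℝ) : ℂ))
          + ∑ j : Fin n, d j * ((t ^ ((1 / 2 : ℝ) - ((j : ℕ) + 1)) : ℝ) : ℂ))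
        =o[atTop] fun t : ℝ => t ^ ((1 / 2 : ℝ) - n)) :
    ∀ j : Fin n, a j = 0 ∧ c j = 0 ∧ d j = 0 := by
  classical
  set a' : ℕ → ℂ := fun j => if h : j < n then a ⟨j, h⟩ else 0 with ha'
  set c' : ℕ → ℂ := fun j => if h : j < n then c ⟨j, h⟩ else 0 with hc'
  set d' : ℕ → ℂ := fun j => if h : j < n then d ⟨j, h⟩ else 0 with hd'
  have hkey := key b hb n a' c' d' ?_
  · intro j
    have := hkey (j : ℕ) j.isLt
    simpa [ha', hc', hd', j.isLt] using this
  · have heq : (fun t : ℝ =>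
          (∑ j : Fin n,
            (a j * Complex.exp (Complex.I * (b * t))
              + c j * Complex.exp (-(Complex.I * (b * t))))
            * ((t ^ ((1 : ℝ) - ((j : ℕ) + 1)) : ℝ) : ℂ))
          + ∑ j : Fin n, d j * ((t ^ ((1 / 2 : ℝ) - ((j : ℕ) + 1)) : ℝ) : ℂ))
        = (fun t : ℝ =>
          (∑ j ∈ Finset.range n,
            (a' j * Complex.exp (Complex.I * (b * t))
              + c' j * Complex.exp (-(Complex.I * (b * t))))
            * ((t ^ (-(j:ℝ)) : ℝ) : ℂ))
          + ∑ j ∈ Finset.range n, d' j * ((t ^ (-(1/2:ℝ) - j) : ℝ) : ℂ)) := by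
      funext t
      congr 1
      · rw [← Fin.sum_univ_eq_sum_range (fun i =>
          (a' i * Complex.exp (Complex.I * (b * t))
            + c' i * Complex.exp (-(Complex.I * (b * t)))) * ((t ^ (-(i:ℝ)) : ℝ) : ℂ)) n]
        refine Finset.sum_congr rfl fun j _ => ?_
        have e1 : ((1 : ℝ) - ((j : ℕ) + 1)) = -((j:ℕ):ℝ) := by push_cast; ring
        have e2 : a' (j:ℕ) = a j := by simp [ha', j.isLt]
        have e3 : c' (j:ℕ) = c j := by simp [hc', j.isLt]
        rw [e1, e2, e3]
      · rw [← Fin.sum_univ_eq_sum_range (fun i =>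
          d' i * ((t ^ (-(1/2:ℝ) - i) : ℝ) : ℂ)) n]
        refine Finset.sum_congr rfl fun j _ => ?_
        have e1 : ((1/2 : ℝ) - ((j : ℕ) + 1)) = -(1/2:ℝ) - ((j:ℕ):ℝ) := by push_cast; ring
        have e2 : d' (j:ℕ) = d j := by simp [hd', j.isLt]
        rw [e1, e2]
    rw [← heq]
    exact h
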